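/- Let φ be the morphism φ(0)=001, φ(1)=1 and x = φ^ω(0). For every k ≥ 0, x begins with the square zz where z = φ^k(0), and |φ^k(0)| = 2^{k+1} − 1. -/

import Mathlib

/-- The morphism φ(0)=001, φ(1)=1. -/
def pmor (b : ℕ) : List ℕ := if b = 0 then [0, 0, 1] else [1]

/-- The iterates φ^k(0) as finite words: pword k = φ^k(0). -/
def pword : ℕ → List ℕ
  | 0 => [0]
  | (k + 1) => (pword k).flatMap pmor

/-- The fixed point x = φ^ω(0): the i-th letter of any sufficiently long
iterate φ^k(0). -/
def pfix (i : ℕ) : ℕ := (pword (i + 1)).getD i 0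

lemma pword_succ (k : ℕ) : pword (k + 1) = pword k ++ pword k ++ [1] := by
  induction k with
  | zero => rfl
  | succ k ih =>
    show (pword (k+1)).flatMap pmor = _
    rw [ih]
    simp only [List.flatMap_append]
    rw [← ih]
    rfl

lemma pword_len (k : ℕ) : (pword k).length = 2 ^ (k + 1) - 1 := by
  induction k with
  | zero => rfl
  | succ k ih =>
    rw [pword_succ]
    simp only [List.length_append, List.length_cons, List.length_nil, ih]
    have : 1 ≤ 2 ^ (k + 1) := Nat.one_le_two_pow
    have : 1 ≤ 2 ^ (k + 2) := Nat.one_le_two_pow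
    rw [pow_succ 2 (k+1)]
    omega

lemma pword_prefix {k m : ℕ} (h : k ≤ m) : pword k <+: pword m := by
  induction m with
  | zero =>
    have : k = 0 := Nat.le_zero.mp h
    simp [this]
  | succ m ih =>
    rcases Nat.lt_or_ge k (m + 1) with h' | h'
    · exact (ih (Nat.lt_succ_iff.mp h')).trans
        (by rw [pword_succ]; exact ((List.prefix_append _ _).trans (List.prefix_append _ _)))
    · have : k = m + 1 := le_antisymm h h'
      simp [this]

lemma pfix_eq {m i : ℕ} (h : i < (pword m).length) : pfix i = (pword m).getD i 0 := by
  unfold pfix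
  rcases Nat.le_total (i + 1) m with h' | h'
  · have hp := pword_prefix h'
    have hi : i < (pword (i + 1)).length := by
      rw [pword_len]
      have h1 : i + 1 < 2 ^ (i + 1) := Nat.lt_two_pow_self
      have h2 : 2 ^ (i + 1) ≤ 2 ^ (i + 2) := Nat.pow_le_pow_right (by norm_num) (by omega)
      omega
    rw [List.getD_eq_getElem _ _ hi, List.getD_eq_getElem _ _ h]
    exact List.IsPrefix.getElem hp hi
  · have hp := pword_prefix h'
    have hi : i < (pword (i + 1)).length :=
      lt_of_lt_of_le h hp.length_le
    rw [List.getD_eq_getElem _ _ hi, List.getD_eq_getElem _ _ h]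
    exact (List.IsPrefix.getElem hp h).symm

/-- for every k ≥ 0, x = φ^ω(0) begins with the square zz,
where z = φ^k(0), and |φ^k(0)| = 2^{k+1} − 1. -/
theorem pfix_initial_square (k : ℕ) :
    (List.range (2 * (pword k).length)).map pfix = pword k ++ pword k ∧
    (pword k).length = 2 ^ (k + 1) - 1 := by
  refine ⟨?_, pword_len k⟩
  have hlen : ((pword k ++ pword k).length) = 2 * (pword k).length := by
    simp; omega
  have hpre : pword k ++ pword k <+: pword (k + 1) := by
    rw [pword_succ]; exact List.prefix_append _ _
  apply List.ext_getElem
  · simp [hlen]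
  · intro i h1 h2
    simp only [List.getElem_map, List.getElem_range]
    have hik : i < (pword (k + 1)).length := lt_of_lt_of_le (hlen ▸ h2) hpre.length_le
    have hik2 : i < (pword k ++ pword k).length := hlen ▸ h2
    rw [pfix_eq hik, List.getD_eq_getElem _ _ hik]
    exact (List.IsPrefix.getElem hpre hik2).symm
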